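/- Let Ψ be a 2-form, ω a p-form and X ∈ V a vector. Then [Ψ, X∧ω] = X·[Ψ, ω] + 2(X⌟Ψ)·ω + [Ψ, X⌟ω]. -/

import Mathlib

open scoped BigOperators

namespace Paper

noncomputable section

/-- Coefficients of exterior forms w.r.t. the fixed orthonormal basis `e₁,…,e_q` of `V = ℝ^q`:
a form is identified with its family of coefficients indexed by subsets of `Fin q`. -/
abbrev Ext (q : ℕ) := Finset (Fin q) → ℝ

variable {q : ℕ}

/-- `(-1)^{#{j ∈ s | j < i}}` -/
def sgn (i : Fin q) (s : Finset (Fin q)) : ℝ := (-1 : ℝ) ^ (s.filter fun j => j < i).card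

/-- Exterior multiplication by the basis vector `e_i`. -/
def wB (i : Fin q) (ω : Ext q) : Ext q := fun s =>
  if i ∈ s then sgn i (s.erase i) * ω (s.erase i) else 0

/-- Interior product (contraction) with the basis vector `e_i`. -/
def iB (i : Fin q) (ω : Ext q) : Ext q := fun s =>
  if i ∈ s then 0 else sgn i s * ω (insert i s)

/-- The basis monomial `e_{i₁} ∧ ⋯ ∧ e_{i_p}`, for `s = {i₁ < ⋯ < i_p}`. -/
def bF (s : Finset (Fin q)) : Ext q := fun t => if t = s then 1 else 0

/-- The basis vector `e_i` of `V = ℝ^q`. -/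
def eB (i : Fin q) : Fin q → ℝ := Pi.single i 1

/-- Exterior multiplication by the vector `X ∈ V`. -/
def wV (X : Fin q → ℝ) (ω : Ext q) : Ext q := ∑ i, X i • wB i ω

/-- Interior product with the vector `X ∈ V`. -/
def iV (X : Fin q → ℝ) (ω : Ext q) : Ext q := ∑ i, X i • iB i ω

/-- Clifford multiplication `X · ω = X ∧ ω − X ⌟ ω` of a vector with a form. -/
def clV (X : Fin q → ℝ) (ω : Ext q) : Ext q := wV X ω - iV X ω

/-- Clifford multiplication `e_{i₁} · e_{i₂} ⋯ e_{i_p} · ω` for `s = {i₁ < ⋯ < i_p}`. -/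
def clB (s : Finset (Fin q)) (ω : Ext q) : Ext q :=
  (Finset.sort s (· ≤ ·)).foldr (fun i τ => clV (eB i) τ) ω

/-- Clifford multiplication of two forms. -/
def clM (ω₁ ω₂ : Ext q) : Ext q := ∑ s : Finset (Fin q), ω₁ s • clB s ω₂

/-- The bracket `[ω₁, ω₂] = ω₁ · ω₂ − ω₂ · ω₁`. -/
def brkt (ω₁ ω₂ : Ext q) : Ext q := clM ω₁ ω₂ - clM ω₂ ω₁

/-- Exterior multiplication by the monomial `e_{i₁} ∧ ⋯ ∧ e_{i_p}`. -/
def wBs (s : Finset (Fin q)) (ω : Ext q) : Ext q :=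
  (Finset.sort s (· ≤ ·)).foldr (fun i τ => wB i τ) ω

/-- The wedge product of two forms. -/
def wM (ω₁ ω₂ : Ext q) : Ext q := ∑ s : Finset (Fin q), ω₁ s • wBs s ω₂

/-- The inner product on forms, for which the basis monomials are orthonormal. -/
def ip (ω φ : Ext q) : ℝ := ∑ s : Finset (Fin q), ω s * φ s

/-- `ω` is a form of (pure) degree `p`. -/
def homog (p : ℕ) (ω : Ext q) : Prop := ∀ s : Finset (Fin q), s.card ≠ p → ω s = 0

/-- The inner product of two vectors of `V = ℝ^q`. -/
def dotP (X Y : Fin q → ℝ) : ℝ := ∑ i, X i * Y i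

/-- A vector of `V` regarded as a 1-form. -/
def oneF (X : Fin q → ℝ) : Ext q := ∑ i, X i • bF {i}

/-- The wedge `X ∧ Y` of two vectors. -/
def w2 (X Y : Fin q → ℝ) : Ext q := wV X (oneF Y)

/-- Two-element subsets, indexing the canonical orthonormal basis of `Λ²V`. -/
def twoSets (q : ℕ) : Finset (Finset (Fin q)) := Finset.univ.filter fun s => s.card = 2

/-- The Bochner operator quadratic form `⟨B_R^{[p]} ω, φ⟩ =
(1/4) Σ_{r,s} ⟨R ψ_r, ψ_s⟩ ⟨[ψ_r,ω],[ψ_s,φ]⟩`, computed in the canonical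
orthonormal basis `{e_i ∧ e_j}_{i<j}` of `Λ²V`. -/
def Bform (R : Ext q →ₗ[ℝ] Ext q) (ω φ : Ext q) : ℝ :=
  (1 / 4 : ℝ) * ∑ s ∈ twoSets q, ∑ t ∈ twoSets q,
    ip (R (bF s)) (bF t) * ip (brkt (bF s) ω) (brkt (bF t) φ)

lemma sgn_empty (i : Fin q) : sgn i ∅ = 1 := by simp [sgn]

lemma sgn_mul_self (i : Fin q) (s : Finset (Fin q)) : sgn i s * sgn i s = 1 := by
  unfold sgn; rw [← pow_add, ← two_mul, pow_mul]; norm_num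

lemma sgn_insert (i j : Fin q) (t : Finset (Fin q)) (hj : j ∉ t) :
    sgn i (insert j t) = (if j < i then -1 else 1) * sgn i t := by
  unfold sgn
  rw [Finset.filter_insert]
  split_ifs with h
  · rw [Finset.card_insert_of_notMem (fun hc => hj (Finset.mem_of_mem_filter _ hc)), pow_succ]
    ring
  · rw [one_mul]

lemma sgn_erase (i j : Fin q) (t : Finset (Fin q)) (hj : j ∈ t) :
    sgn i t = (if j < i then -1 else 1) * sgn i (t.erase j) := by
  conv_lhs => rw [← Finset.insert_erase hj]
  rw [sgn_insert i j _ (Finset.notMem_erase j t)]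

lemma wB_wB {i j : Fin q} (h : i ≠ j) (ω : Ext q) : wB i (wB j ω) = -wB j (wB i ω) := by
  funext s
  simp only [wB, Pi.neg_apply]
  by_cases hi : i ∈ s <;> by_cases hj : j ∈ s
  · have hji : j ∈ s.erase i := Finset.mem_erase.2 ⟨h.symm, hj⟩
    have hij : i ∈ s.erase j := Finset.mem_erase.2 ⟨h, hi⟩
    rw [if_pos hi, if_pos hj, if_pos hji, if_pos hij,
        show (s.erase j).erase i = (s.erase i).erase j from Finset.erase_right_comm]
    have e1 : sgn i (s.erase i) = (if j < i then -1 else 1) * sgn i ((s.erase i).erase j) := by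
      rw [← sgn_erase i j (s.erase i) hji]
    have e2 : sgn j (s.erase j) = (if i < j then -1 else 1) * sgn j ((s.erase i).erase j) := by
      rw [show (s.erase i).erase j = (s.erase j).erase i from Finset.erase_right_comm,
        ← sgn_erase j i (s.erase j) hij]
    rw [e1, e2]
    rcases h.lt_or_gt with hl | hl
    · rw [if_neg (asymm hl), if_pos hl]; ring
    · rw [if_pos hl, if_neg (asymm hl)]; ring
  · simp [hi, hj, Finset.mem_erase]
  · simp [hi, hj, Finset.mem_erase]
  · simp [hi, hj]

lemma wB_wB_self (i : Fin q) (ω : Ext q) : wB i (wB i ω) = 0 := by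
  funext s
  simp [wB, Finset.notMem_erase]

lemma iB_iB_self (i : Fin q) (ω : Ext q) : iB i (iB i ω) = 0 := by
  funext s
  simp [iB, Finset.mem_insert_self]

lemma iB_iB {i j : Fin q} (h : i ≠ j) (ω : Ext q) : iB i (iB j ω) = -iB j (iB i ω) := by
  funext s
  simp only [iB, Pi.neg_apply]
  by_cases hi : i ∈ s <;> by_cases hj : j ∈ s
  · simp [hi, hj]
  · simp [hi, hj, Finset.mem_insert, h.symm]
  · simp [hi, hj, Finset.mem_insert, h]
  · rw [if_neg hi, if_neg hj,
      if_neg (by simp [Finset.mem_insert, h.symm, hj]),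
      if_neg (by simp [Finset.mem_insert, h, hi]),
      Finset.insert_comm,
      sgn_insert j i s hi, sgn_insert i j s hj]
    rcases h.lt_or_gt with hl | hl
    · rw [if_neg (asymm hl), if_pos hl]; ring
    · rw [if_pos hl, if_neg (asymm hl)]; ring

lemma iB_wB {i j : Fin q} (h : i ≠ j) (ω : Ext q) : iB i (wB j ω) = -wB j (iB i ω) := by
  funext s
  simp only [iB, wB, Pi.neg_apply]
  by_cases hi : i ∈ s
  · rw [if_pos hi]
    by_cases hj : j ∈ s
    · rw [if_pos hj, if_pos (Finset.mem_erase.2 ⟨h, hi⟩)]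
      simp
    · simp [hj]
  · rw [if_neg hi]
    by_cases hj : j ∈ s
    · rw [if_pos (Finset.mem_insert_of_mem hj), if_pos hj,
        if_neg (fun hc => hi (Finset.mem_of_mem_erase hc)),
        show (insert i s).erase j = insert i (s.erase j) from Finset.erase_insert_of_ne h,
        sgn_erase i j s hj,
        sgn_insert j i (s.erase j) (fun hc => hi (Finset.mem_of_mem_erase hc))]
      rcases h.lt_or_gt with hl | hl
      · rw [if_neg (asymm hl), if_pos hl]; ring
      · rw [if_pos hl, if_neg (asymm hl)]; ring
    · rw [if_neg hj, if_neg (by simp [Finset.mem_insert, h.symm, hj])]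
      simp

lemma iB_wB_self (i : Fin q) (ω : Ext q) : iB i (wB i ω) + wB i (iB i ω) = ω := by
  funext s
  simp only [iB, wB, Pi.add_apply]
  by_cases hi : i ∈ s
  · simp only [if_pos hi, if_neg (Finset.notMem_erase i s), Finset.insert_erase hi]
    rw [zero_add, ← mul_assoc, sgn_mul_self, one_mul]
  · simp only [if_neg hi, if_pos (Finset.mem_insert_self i s), Finset.erase_insert hi]
    rw [add_zero, ← mul_assoc, sgn_mul_self, one_mul]

def wBL (i : Fin q) : Ext q →ₗ[ℝ] Ext q where
  toFun := wB i
  map_add' x y := by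
    funext s; by_cases h : i ∈ s <;> simp [wB, h, mul_add]
  map_smul' r x := by
    funext s; by_cases h : i ∈ s <;> simp [wB, h, mul_left_comm]

def iBL (i : Fin q) : Ext q →ₗ[ℝ] Ext q where
  toFun := iB i
  map_add' x y := by
    funext s; by_cases h : i ∈ s <;> simp [iB, h, mul_add]
  map_smul' r x := by
    funext s; by_cases h : i ∈ s <;> simp [iB, h, mul_left_comm]

def cBL (i : Fin q) : Ext q →ₗ[ℝ] Ext q := wBL i - iBL i

lemma cBL_apply (i : Fin q) (ω : Ext q) : cBL i ω = wB i ω - iB i ω := rfl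

lemma wB_sub (i : Fin q) (x y : Ext q) : wB i (x - y) = wB i x - wB i y :=
  (wBL i).map_sub x y

lemma iB_sub (i : Fin q) (x y : Ext q) : iB i (x - y) = iB i x - iB i y :=
  (iBL i).map_sub x y

lemma cBL_cBL {i j : Fin q} (h : i ≠ j) (ω : Ext q) : cBL i (cBL j ω) = -cBL j (cBL i ω) := by
  simp only [cBL_apply, wB_sub, iB_sub]
  rw [wB_wB h, iB_iB h, iB_wB h, iB_wB h.symm]
  abel

lemma cBL_cBL_self (i : Fin q) (ω : Ext q) : cBL i (cBL i ω) = -ω := by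
  simp only [cBL_apply, wB_sub, iB_sub, wB_wB_self, iB_iB_self]
  have h : -ω = -(iB i (wB i ω) + wB i (iB i ω)) := by rw [iB_wB_self]
  rw [h]; abel

lemma iB_cB (k i : Fin q) (ω : Ext q) :
    iB k (cBL i ω) = (if k = i then ω else 0) - cBL i (iB k ω) := by
  by_cases h : k = i
  · subst h
    simp only [cBL_apply, iB_sub, wB_sub, iB_iB_self, if_pos rfl]
    simp only [sub_zero]
    rw [eq_sub_iff_add_eq]
    exact iB_wB_self k ω
  · simp only [cBL_apply, iB_sub, wB_sub, if_neg h, iB_wB h, iB_iB h]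
    abel

lemma cB_cB' (k i : Fin q) (ω : Ext q) :
    cBL k (cBL i ω) = (if k = i then -((2:ℝ) • ω) else 0) - cBL i (cBL k ω) := by
  by_cases h : k = i
  · subst h
    rw [if_pos rfl, cBL_cBL_self, two_smul]
    abel
  · rw [cBL_cBL h, if_neg h]
    abel


def clLL (l : List (Fin q)) : Ext q →ₗ[ℝ] Ext q :=
  l.foldr (fun i F => (cBL i).comp F) LinearMap.id

lemma clLL_nil (ω : Ext q) : clLL ([] : List (Fin q)) ω = ω := rfl

lemma clLL_cons (i : Fin q) (l : List (Fin q)) (ω : Ext q) :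
    clLL (i :: l) ω = cBL i (clLL l ω) := rfl

lemma clV_eB (i : Fin q) (ω : Ext q) : clV (eB i) ω = cBL i ω := by
  rw [clV, cBL_apply]
  congr 1
  · rw [wV, Finset.sum_eq_single i
      (fun b _ hb => by simp [eB, Pi.single_eq_of_ne hb])
      (fun hn => absurd (Finset.mem_univ i) hn)]
    simp [eB]
  · rw [iV, Finset.sum_eq_single i
      (fun b _ hb => by simp [eB, Pi.single_eq_of_ne hb])
      (fun hn => absurd (Finset.mem_univ i) hn)]
    simp [eB]

lemma clB_eq (s : Finset (Fin q)) (ω : Ext q) :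
    clB s ω = clLL (Finset.sort s (· ≤ ·)) ω := by
  rw [clB]
  induction Finset.sort s (· ≤ ·) with
  | nil => rfl
  | cons a l ih => rw [List.foldr_cons, ih, clLL_cons, clV_eB]

lemma clB_singleton (i : Fin q) (ω : Ext q) : clB {i} ω = cBL i ω := by
  rw [clB_eq, Finset.sort_singleton]; rfl

lemma clB_cons {i : Fin q} {t : Finset (Fin q)} (h : ∀ b ∈ t, i < b) (ω : Ext q) :
    clB (insert i t) ω = cBL i (clB t ω) := by
  have hi : i ∉ t := fun hm => lt_irrefl i (h i hm)
  rw [clB_eq, clB_eq, Finset.sort_insert _ (fun b hb => (h b hb).le) hi, clLL_cons]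

lemma sgn_of_forall_lt {i : Fin q} {t : Finset (Fin q)} (h : ∀ b ∈ t, i < b) :
    sgn i t = 1 := by
  unfold sgn
  rw [Finset.filter_eq_empty_iff.2 (fun x hx => not_lt.2 (h x hx).le)]
  simp

lemma cBL_clB (i : Fin q) (t : Finset (Fin q)) :
    ∀ ω : Ext q, i ∉ t → cBL i (clB t ω) = sgn i t • clB (insert i t) ω := by
  induction t using Finset.strongInduction with
  | _ t ih =>
    intro ω h
    by_cases hall : ∀ b ∈ t, i < b
    · rw [clB_cons hall, sgn_of_forall_lt hall, one_smul]
    · push_neg at hall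
      obtain ⟨b, hb, hbi⟩ := hall
      have hne : t.Nonempty := ⟨b, hb⟩
      set m := t.min' hne with hm
      have hmem : m ∈ t := t.min'_mem hne
      have hmi : m < i := lt_of_le_of_lt (t.min'_le b hb)
        (lt_of_le_of_ne hbi (fun hc => h (hc ▸ hb)))
      have him : i ≠ m := fun hc => lt_irrefl i (hc ▸ hmi)
      have hmlt : ∀ c ∈ t.erase m, m < c := fun c hc =>
        lt_of_le_of_ne (t.min'_le c (Finset.mem_of_mem_erase hc))
          (Ne.symm (Finset.ne_of_mem_erase hc))
      have h1 : clB t ω = cBL m (clB (t.erase m) ω) := by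
        conv_lhs => rw [← Finset.insert_erase hmem]
        rw [clB_cons hmlt]
      have hie : i ∉ t.erase m := fun hc => h (Finset.mem_of_mem_erase hc)
      have h2 : cBL i (clB (t.erase m) ω) = sgn i (t.erase m) • clB (insert i (t.erase m)) ω :=
        ih (t.erase m) (Finset.erase_ssubset hmem) ω hie
      have hmlt2 : ∀ c ∈ insert i (t.erase m), m < c := by
        intro c hc
        rcases Finset.mem_insert.1 hc with rfl | hc
        · exact hmi
        · exact hmlt c hc
      have h3 : cBL m (clB (insert i (t.erase m)) ω)
          = clB (insert m (insert i (t.erase m))) ω := (clB_cons hmlt2 ω).symm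
      have h4 : insert m (insert i (t.erase m)) = insert i t := by
        rw [Finset.insert_comm, Finset.insert_erase hmem]
      have h5 : sgn i t = -sgn i (t.erase m) := by
        rw [sgn_erase i m t hmem, if_pos hmi]; ring
      rw [h1, cBL_cBL him, h2, map_smul, h3, h4, h5, neg_smul]

lemma cBL_clB_mem (i : Fin q) (t : Finset (Fin q)) (h : i ∈ t) (ω : Ext q) :
    cBL i (clB t ω) = -(sgn i (t.erase i) • clB (t.erase i) ω) := by
  have h1 : cBL i (clB (t.erase i) ω) = sgn i (t.erase i) • clB t ω := by
    rw [cBL_clB i _ ω (Finset.notMem_erase i t), Finset.insert_erase h]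
  have h2 : clB t ω = sgn i (t.erase i) • cBL i (clB (t.erase i) ω) := by
    rw [h1, smul_smul, sgn_mul_self, one_smul]
  rw [h2, map_smul, cBL_cBL_self, smul_neg]

def clML (a : Ext q) : Ext q →ₗ[ℝ] Ext q :=
  ∑ s : Finset (Fin q), a s • clLL (Finset.sort s (· ≤ ·))

lemma clM_eq (a b : Ext q) : clM a b = clML a b := by
  rw [clM, clML, LinearMap.sum_apply]
  exact Finset.sum_congr rfl fun s _ => by rw [LinearMap.smul_apply, clB_eq]

lemma clM_add_right (a u v : Ext q) : clM a (u + v) = clM a u + clM a v := by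
  rw [clM_eq, clM_eq, clM_eq, map_add]

lemma clM_sub_right (a u v : Ext q) : clM a (u - v) = clM a u - clM a v := by
  rw [clM_eq, clM_eq, clM_eq, map_sub]

lemma clM_sum_left {ι : Type*} (A : Finset ι) (g : ι → Ext q) (c : Ext q) :
    clM (∑ t ∈ A, g t) c = ∑ t ∈ A, clM (g t) c := by
  unfold clM
  simp only [Finset.sum_apply, Finset.sum_smul]
  rw [Finset.sum_comm]

lemma clM_smul_left (r : ℝ) (a c : Ext q) : clM (r • a) c = r • clM a c := by
  unfold clM
  rw [Finset.smul_sum]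
  exact Finset.sum_congr rfl fun s _ => by
    rw [Pi.smul_apply, smul_eq_mul, mul_smul]

lemma clM_add_left (a b c : Ext q) : clM (a + b) c = clM a c + clM b c := by
  unfold clM
  rw [← Finset.sum_add_distrib]
  exact Finset.sum_congr rfl fun s _ => by rw [Pi.add_apply, add_smul]

lemma clM_sub_left (a b c : Ext q) : clM (a - b) c = clM a c - clM b c := by
  unfold clM
  rw [← Finset.sum_sub_distrib]
  exact Finset.sum_congr rfl fun s _ => by rw [Pi.sub_apply, sub_smul]

lemma sum_mem_split (i : Fin q) (f : Finset (Fin q) → Ext q) :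
    ∑ s : Finset (Fin q), f s
      = ∑ s ∈ Finset.univ.filter (fun s => i ∉ s), (f s + f (insert i s)) := by
  rw [Finset.sum_add_distrib]
  rw [← Finset.sum_filter_add_sum_filter_not Finset.univ (fun s => i ∉ s) f]
  congr 1
  refine Finset.sum_bij' (fun s _ => s.erase i) (fun s _ => insert i s) ?_ ?_ ?_ ?_ ?_
  · intro a ha
    simp only [Finset.mem_filter, Finset.mem_univ, true_and]
    exact Finset.notMem_erase i a
  · intro a ha
    simp only [Finset.mem_filter, Finset.mem_univ, true_and, not_not]
    exact Finset.mem_insert_self i a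
  · intro a ha
    simp only [Finset.mem_filter, Finset.mem_univ, true_and, not_not] at ha
    exact Finset.insert_erase ha
  · intro a ha
    simp only [Finset.mem_filter, Finset.mem_univ, true_and] at ha
    exact Finset.erase_insert ha
  · intro a ha
    simp only [Finset.mem_filter, Finset.mem_univ, true_and, not_not] at ha
    rw [Finset.insert_erase ha]

lemma clM_cBL_left (i : Fin q) (a c : Ext q) : clM (cBL i a) c = cBL i (clM a c) := by
  have hR : cBL i (clM a c) = ∑ s : Finset (Fin q), a s • cBL i (clB s c) := by
    rw [clM, map_sum]
    exact Finset.sum_congr rfl fun s _ => by rw [map_smul]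
  rw [clM, hR, sum_mem_split i (fun s => (cBL i a) s • clB s c),
    sum_mem_split i (fun s => a s • cBL i (clB s c))]
  refine Finset.sum_congr rfl fun s hs => ?_
  simp only [Finset.mem_filter, Finset.mem_univ, true_and] at hs
  have hmem : i ∈ insert i s := Finset.mem_insert_self i s
  have hco1 : (cBL i a) s = -(sgn i s * a (insert i s)) := by
    rw [cBL_apply, Pi.sub_apply, wB, iB, if_neg hs, if_neg hs, zero_sub]
  have hco2 : (cBL i a) (insert i s) = sgn i s * a s := by
    rw [cBL_apply, Pi.sub_apply, wB, iB, if_pos hmem, if_pos hmem, sub_zero,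
      Finset.erase_insert hs]
  rw [hco1, hco2, cBL_clB i s c hs, cBL_clB_mem i (insert i s) hmem c,
    Finset.erase_insert hs]
  rw [smul_smul, smul_neg, smul_smul, mul_comm (a s) (sgn i s),
    mul_comm (a (insert i s)) (sgn i s)]
  module

lemma clM_clLL (l : List (Fin q)) (b c : Ext q) :
    clM (clLL l b) c = clLL l (clM b c) := by
  induction l with
  | nil => rfl
  | cons a l ih => rw [clLL_cons, clLL_cons, clM_cBL_left, ih]

lemma clM_clB (s : Finset (Fin q)) (b c : Ext q) :
    clM (clB s b) c = clB s (clM b c) := by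
  rw [clB_eq, clB_eq, clM_clLL]

lemma clM_assoc (a b c : Ext q) : clM a (clM b c) = clM (clM a b) c := by
  have h : clM (clM a b) c = ∑ s : Finset (Fin q), a s • clB s (clM b c) := by
    rw [show clM a b = ∑ s : Finset (Fin q), a s • clB s b from rfl, clM_sum_left]
    exact Finset.sum_congr rfl fun s _ => by rw [clM_smul_left, clM_clB]
  rw [h]; rfl

lemma clM_bF (s : Finset (Fin q)) (ω : Ext q) : clM (bF s) ω = clB s ω := by
  unfold clM bF
  simp [ite_smul, Finset.sum_ite_eq']

lemma bF_expand (ω : Ext q) : ω = ∑ s : Finset (Fin q), ω s • bF s := by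
  funext t
  simp [bF, Finset.sum_apply, mul_ite, Finset.sum_ite_eq]

lemma clV_sum (X : Fin q → ℝ) (ω : Ext q) : clV X ω = ∑ i, X i • cBL i ω := by
  rw [clV, wV, iV, ← Finset.sum_sub_distrib]
  exact Finset.sum_congr rfl fun i _ => by rw [← smul_sub, cBL_apply]

def clVL (X : Fin q → ℝ) : Ext q →ₗ[ℝ] Ext q := ∑ i, X i • cBL i

lemma clV_eqL (X : Fin q → ℝ) (ω : Ext q) : clV X ω = clVL X ω := by
  rw [clV_sum, clVL, LinearMap.sum_apply]
  exact Finset.sum_congr rfl fun i _ => by rw [LinearMap.smul_apply]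

def iVL (X : Fin q → ℝ) : Ext q →ₗ[ℝ] Ext q := ∑ i, X i • iBL i

lemma iV_eqL (X : Fin q → ℝ) (ω : Ext q) : iV X ω = iVL X ω := by
  rw [iV, iVL, LinearMap.sum_apply]
  exact Finset.sum_congr rfl fun i _ => by rw [LinearMap.smul_apply]; rfl

lemma clM_oneF (X : Fin q → ℝ) (ω : Ext q) : clM (oneF X) ω = clV X ω := by
  rw [show oneF X = ∑ i, X i • bF {i} from rfl, clM_sum_left, clV_sum]
  exact Finset.sum_congr rfl fun i _ => by rw [clM_smul_left, clM_bF, clB_singleton]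

lemma cB_bF {i : Fin q} {s : Finset (Fin q)} (h : i ∉ s) :
    cBL i (bF s) = sgn i s • bF (insert i s) := by
  funext t
  rw [cBL_apply, Pi.sub_apply, Pi.smul_apply, wB, iB, bF, bF, bF]
  by_cases ht : i ∈ t
  · rw [if_pos ht, if_pos ht, sub_zero]
    by_cases he : t = insert i s
    · have he2 : t.erase i = s := by rw [he, Finset.erase_insert h]
      rw [if_pos he2, if_pos he, he2, mul_one, smul_eq_mul, mul_one]
    · have he2 : ¬ t.erase i = s := fun hc => he (by rw [← hc, Finset.insert_erase ht])
      rw [if_neg he2, if_neg he, mul_zero, smul_eq_mul, mul_zero]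
  · rw [if_neg ht, if_neg ht, zero_sub,
      if_neg (fun hc : insert i t = s => h (hc ▸ Finset.mem_insert_self i t)),
      if_neg (fun hc : t = insert i s => ht (hc ▸ Finset.mem_insert_self i s))]
    rw [mul_zero, neg_zero, smul_eq_mul, mul_zero]

lemma iB_bF_empty (k : Fin q) : iB k (bF (∅ : Finset (Fin q))) = 0 := by
  funext t
  simp [iB, bF, Finset.insert_ne_empty]

lemma Kpair {i j : Fin q} (hij : i < j) (k : Fin q) :
    cBL i (cBL j (bF {k})) - cBL k (bF ({i, j} : Finset (Fin q)))
      = (2:ℝ) • iB k (bF ({i, j} : Finset (Fin q))) := by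
  have hne : i ≠ j := ne_of_lt hij
  have h1 : bF ({k} : Finset (Fin q)) = cBL k (bF ∅) := by
    rw [cB_bF (Finset.notMem_empty k), sgn_empty, one_smul, Finset.insert_empty]
  have h2 : bF ({i, j} : Finset (Fin q)) = cBL i (cBL j (bF ∅)) := by
    rw [show cBL j (bF (∅ : Finset (Fin q))) = bF {j} by
        rw [cB_bF (Finset.notMem_empty j), sgn_empty, one_smul, Finset.insert_empty],
      cB_bF (by simp [hne]),
      show sgn i ({j} : Finset (Fin q)) = 1 by
        simp [sgn, Finset.filter_singleton, asymm hij]]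
    rw [one_smul]
  have hy0 : iB k (bF (∅ : Finset (Fin q))) = 0 := iB_bF_empty k
  rw [h1, h2, cB_cB' k i, iB_cB k i, iB_cB k j, hy0, map_zero, sub_zero, cB_cB' k j,
    map_sub]
  by_cases hki : k = i <;> by_cases hkj : k = j
  · exact absurd (hki.symm.trans hkj) hne
  · simp only [if_pos hki, if_neg hkj, map_zero, sub_zero, smul_zero, smul_sub]
    abel
  · simp only [if_neg hki, if_pos hkj, map_neg, map_smul, zero_sub, sub_zero, smul_zero,
      smul_neg, smul_sub]
    abel
  · simp only [if_neg hki, if_neg hkj, map_zero, sub_zero, zero_sub, smul_zero, smul_sub]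
    abel

lemma keyK {Ψ : Ext q} (hΨ : homog 2 Ψ) (X : Fin q → ℝ) :
    clM Ψ (oneF X) - clM (oneF X) Ψ = (2:ℝ) • iV X Ψ := by
  have hexp : Ψ = ∑ s : Finset (Fin q), Ψ s • bF s := bF_expand Ψ
  rw [clM_oneF]
  have L2 : clV X Ψ = ∑ s : Finset (Fin q), Ψ s • clV X (bF s) := by
    conv_lhs => rw [hexp]
    rw [clV_eqL, map_sum]
    exact Finset.sum_congr rfl fun s _ => by rw [map_smul, clV_eqL]
  have L3 : iV X Ψ = ∑ s : Finset (Fin q), Ψ s • iV X (bF s) := by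
    conv_lhs => rw [hexp]
    rw [iV_eqL, map_sum]
    exact Finset.sum_congr rfl fun s _ => by rw [map_smul, iV_eqL]
  rw [show clM Ψ (oneF X) = ∑ s : Finset (Fin q), Ψ s • clB s (oneF X) from rfl,
    L2, L3, ← Finset.sum_sub_distrib, Finset.smul_sum]
  refine Finset.sum_congr rfl fun s _ => ?_
  by_cases hs : s.card = 2
  · obtain ⟨a, b, hab, rfl⟩ := Finset.card_eq_two.1 hs
    have main : ∀ (i j : Fin q), i < j →
        clB ({i, j} : Finset (Fin q)) (oneF X) - clV X (bF {i, j})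
          = (2:ℝ) • iV X (bF {i, j}) := by
      intro i j hij
      have hb : clB ({i, j} : Finset (Fin q)) (oneF X) = cBL i (cBL j (oneF X)) := by
        rw [show ({i, j} : Finset (Fin q)) = insert i {j} from rfl,
          clB_cons (fun b hb => by
            rw [Finset.mem_singleton] at hb; exact hb ▸ hij),
          clB_singleton]
      rw [hb, clV_sum, show iV X (bF ({i,j}:Finset (Fin q))) = ∑ k, X k • iB k (bF {i,j}) from rfl]
      rw [show oneF X = ∑ k, X k • bF {k} from rfl]
      rw [map_sum, map_sum]
      simp only [map_smul]
      rw [← Finset.sum_sub_distrib, Finset.smul_sum]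
      refine Finset.sum_congr rfl fun k _ => ?_
      rw [← smul_sub, Kpair hij k, smul_comm]
    have hmain : clB ({a, b} : Finset (Fin q)) (oneF X) - clV X (bF {a, b})
        = (2:ℝ) • iV X (bF {a, b}) := by
      rcases hab.lt_or_gt with h | h
      · exact main a b h
      · rw [Finset.pair_comm a b]
        exact main b a h
    rw [← smul_sub, hmain, smul_comm]
  · rw [hΨ _ hs]
    simp

/-- Lemma 3.2 of the paper. For a 2-form `Ψ`, a `p`-form `ω` and a
vector `X ∈ V`, `[Ψ, X∧ω] = X·[Ψ,ω] + 2(X⌟Ψ)·ω + [Ψ, X⌟ω]`. -/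
theorem statement_1 {q p : ℕ} (hq : 1 ≤ q) (Ψ ω : Ext q) (X : Fin q → ℝ)
    (hΨ : homog 2 Ψ) (hω : homog p ω) :
    brkt Ψ (wV X ω) = clV X (brkt Ψ ω) + (2 : ℝ) • clM (iV X Ψ) ω + brkt Ψ (iV X ω) := by
  have hw : wV X ω = clV X ω + iV X ω := by rw [clV, sub_add_cancel]
  have hsplit : brkt Ψ (wV X ω) = brkt Ψ (clV X ω) + brkt Ψ (iV X ω) := by
    rw [hw]; unfold brkt
    rw [clM_add_right, clM_add_left]
    abel
  rw [hsplit]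
  have main2 : brkt Ψ (clV X ω) = clV X (brkt Ψ ω) + (2:ℝ) • clM (iV X Ψ) ω := by
    rw [show clV X ω = clM (oneF X) ω from (clM_oneF X ω).symm,
        show clV X (brkt Ψ ω) = clM (oneF X) (brkt Ψ ω) from (clM_oneF X _).symm]
    unfold brkt
    rw [clM_assoc Ψ (oneF X) ω, ← clM_assoc (oneF X) ω Ψ, clM_sub_right,
      clM_assoc (oneF X) Ψ ω]
    have hK : clM Ψ (oneF X) = clM (oneF X) Ψ + (2:ℝ) • iV X Ψ :=
      by rw [← keyK hΨ X]; abel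
    rw [hK, clM_add_left, clM_smul_left]
    abel
  rw [main2]

end
end Paper
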